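/- arXiv:1908.05319 — 2 statements merged into one kernel-verified Lean document; each statement's English description precedes it below -/
import Mathlib

section
/- Under a nontrivial sparse configuration (π_{j0} = 1 for all j ∉ S and π_{j0} < 1 for all j ∈ S, with S nonempty), the oracle sGBH and the oracle GBH reject exactly the same set of hypotheses at the same nominal FDR level α. Concretely: let m_S = Σ_{j∈S} n_j, π_0 = (1/m)Σ_j π_{j0}n_j and π̃_0 = (Σ_{j∈S}π_{j0}n_j)/m_S; then (1-π̃_0)·m_S = (1-π_0)·m, the GBH-weighted p-values p*_{jk} = p_{jk}·π_{j0}(1-π_0)/(1-π_{j0}) (j∈S) and sGBH-weighted p-values p̃_{jk} = p_{jk}·π_{j0}(1-π̃_0)/(1-π_{j0}) satisfy p̃_{jk}/p*_{jk} = (1-π̃_0)/(1-π_0) = m/m_S, and the BH procedure at level α applied to {p*_{jk}} with denominator m rejects the same hypotheses as BH applied to {p̃_{jk}} with denominator m_S. -/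
/-- under a nontrivial sparse configuration, the oracle sGBH and oracle GBH
reject the same hypotheses. Concretely: `(1-π̃₀)·m_S = (1-π₀)·m`; the sGBH- and
GBH-weighted p-values satisfy `p̃ * (1-π₀) = p* * (1-π̃₀)` and `p̃/p* = (1-π̃₀)/(1-π₀) = m/m_S`;
and BH at level α applied to the sorted GBH-weighted p-values `q` with denominator `m`
rejects the same number as BH applied to `((1-π̃₀)/(1-π₀))·q` with denominator `m_S`. -/
theorem stmt2 (l : ℕ) (n : Fin l → ℕ) (hn : ∀ j, 0 < n j)
    (piG : Fin l → ℝ) (hpiG0 : ∀ j, 0 ≤ piG j)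
    (S : Finset (Fin l)) (hS : S.Nonempty)
    (hsparse1 : ∀ j ∉ S, piG j = 1) (hsparse2 : ∀ j ∈ S, piG j < 1)
    (m mS : ℕ) (hm : (m : ℝ) = ∑ j, (n j : ℝ)) (hmS : (mS : ℝ) = ∑ j ∈ S, (n j : ℝ))
    (pi0 pit0 : ℝ)
    (hpi0 : pi0 = (∑ j, piG j * (n j : ℝ)) / (m : ℝ))
    (hpit0 : pit0 = (∑ j ∈ S, piG j * (n j : ℝ)) / (mS : ℝ))
    (α : ℝ) (hα : 0 < α) :
    ((1 - pit0) * (mS : ℝ) = (1 - pi0) * (m : ℝ)) ∧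
    (∀ j ∈ S, ∀ x : ℝ, 0 < x → 0 < piG j →
      (x * piG j * (1 - pit0) / (1 - piG j)) / (x * piG j * (1 - pi0) / (1 - piG j)) =
        (1 - pit0) / (1 - pi0) ∧
      (1 - pit0) / (1 - pi0) = (m : ℝ) / (mS : ℝ)) ∧
    (∀ q : ℕ → ℝ, (∀ i i', i ≤ i' → q i ≤ q i') →
      ((Finset.Icc 1 mS).filter (fun i => q i ≤ (i : ℝ) * α / (m : ℝ))).sup id =
        ((Finset.Icc 1 mS).filter
          (fun i => ((1 - pit0) / (1 - pi0)) * q i ≤ (i : ℝ) * α / (mS : ℝ))).sup id) := by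
  obtain ⟨j0, hj0⟩ := hS
  haveI : Nonempty (Fin l) := ⟨j0⟩
  have hmS0 : (0:ℝ) < mS := by
    rw [hmS]; exact Finset.sum_pos (fun j _ => by exact_mod_cast hn j) ⟨j0, hj0⟩
  have hm0 : (0:ℝ) < m := by
    rw [hm]; exact Finset.sum_pos (fun j _ => by exact_mod_cast hn j) Finset.univ_nonempty
  have hA : (1 - pit0) * mS = ∑ j ∈ S, (1 - piG j) * (n j : ℝ) := by
    rw [hpit0, sub_mul, one_mul, div_mul_cancel₀ _ (ne_of_gt hmS0), hmS,
      ← Finset.sum_sub_distrib]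
    exact Finset.sum_congr rfl (fun j _ => by ring)
  have hB : (1 - pi0) * m = ∑ j ∈ S, (1 - piG j) * (n j : ℝ) := by
    rw [hpi0, sub_mul, one_mul, div_mul_cancel₀ _ (ne_of_gt hm0), hm,
      ← Finset.sum_sub_distrib]
    rw [show ∑ j, ((n j:ℝ) - piG j * n j) = ∑ j, (1 - piG j) * (n j:ℝ) from
      Finset.sum_congr rfl fun j _ => by ring]
    symm
    apply Finset.sum_subset (Finset.subset_univ S)
    intro j _ hj
    rw [hsparse1 j hj]; ring
  have hkey : (1 - pit0) * mS = (1 - pi0) * m := hA.trans hB.symm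
  have hsum_pos : 0 < ∑ j ∈ S, (1 - piG j) * (n j : ℝ) :=
    Finset.sum_pos (fun j hj => mul_pos (by linarith [hsparse2 j hj])
      (by exact_mod_cast hn j)) ⟨j0, hj0⟩
  have h1pi0 : 0 < 1 - pi0 := by nlinarith [hB, hm0, hsum_pos]
  have h1pit0 : 0 < 1 - pit0 := by nlinarith [hA, hmS0, hsum_pos]
  have hc : (1 - pit0) / (1 - pi0) = (m : ℝ) / (mS : ℝ) := by
    rw [div_eq_div_iff (ne_of_gt h1pi0) (ne_of_gt hmS0)]
    linarith [hkey]
  refine ⟨hkey, ?_, ?_⟩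
  · intro j hj x hx hpg
    have h1 : (1 : ℝ) - piG j ≠ 0 := by have := hsparse2 j hj; linarith
    refine ⟨?_, hc⟩
    rw [div_div_div_eq]
    field_simp
  · intro q hq
    congr 1
    apply Finset.filter_congr
    intro i hi
    simp only [hc, decide_eq_true_eq]
    rw [div_mul_eq_mul_div, div_le_div_iff_of_pos_right hmS0, le_div_iff₀ hm0, mul_comm]
end

section
/- Let p be a random variable with P(p ≤ t) ≤ t for all t ∈ [0,1] (super-uniform), independent of a random vector q, let C = C(q) ∈ (0,∞) be measurable in q, and fix r ≥ 1 and a ∈ (0,1]. Then E[(1/r)·1{p ≤ r·a·C}] ≤ a·E[C]. -/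
open MeasureTheory ProbabilityTheory

/-- if `p` is super-uniform, independent of `q`, `C = g ∘ q > 0` is
integrable, `r ≥ 1` and `a ∈ (0,1]`, then `E[(1/r)·1{p ≤ r·a·C}] ≤ a·E[C]`. -/
theorem stmt11 {Ω E : Type*} [MeasurableSpace Ω] [MeasurableSpace E]
    (μ : Measure Ω) [IsProbabilityMeasure μ]
    (p : Ω → ℝ) (q : Ω → E) (g : E → ℝ)
    (hp : Measurable p) (hq : Measurable q) (hg : Measurable g)
    (hsuper : ∀ t : ℝ, 0 ≤ t → t ≤ 1 → μ {ω | p ω ≤ t} ≤ ENNReal.ofReal t)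
    (hindep : IndepFun p q μ)
    (hCpos : ∀ ω, 0 < g (q ω)) (hCint : Integrable (fun ω => g (q ω)) μ)
    (r : ℕ) (hr : 1 ≤ r) (a : ℝ) (ha : 0 < a) (ha1 : a ≤ 1) :
    ∫ ω, (1 / (r : ℝ)) * Set.indicator {ω' | p ω' ≤ (r : ℝ) * a * g (q ω')}
        (fun _ => (1 : ℝ)) ω ∂μ ≤ a * ∫ ω, g (q ω) ∂μ := by
  have hr0 : (0 : ℝ) < (r : ℝ) := by exact_mod_cast hr
  set c : E → ℝ := fun y => (r : ℝ) * a * g y with hc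
  set T : Set (ℝ × E) := {z | z.1 ≤ c z.2} with hT
  have hTm : MeasurableSet T :=
    measurableSet_le measurable_fst (measurable_const.mul (hg.comp measurable_snd))
  set S : Set Ω := {ω' | p ω' ≤ (r : ℝ) * a * g (q ω')} with hSdef
  have hSm : MeasurableSet S :=
    measurableSet_le hp (measurable_const.mul (hg.comp hq))
  -- law of q and p
  set μq : Measure E := μ.map q with hμq
  set μp : Measure ℝ := μ.map p with hμp
  haveI : IsProbabilityMeasure μq := Measure.isProbabilityMeasure_map hq.aemeasurable
  haveI : IsProbabilityMeasure μp := Measure.isProbabilityMeasure_map hp.aemeasurable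
  -- integrability of g w.r.t. μq
  have hgint : Integrable g μq := by
    rw [hμq, integrable_map_measure hg.aestronglyMeasurable hq.aemeasurable]
    exact hCint
  have hgint' : ∫ y, g y ∂μq = ∫ ω, g (q ω) ∂μ :=
    integral_map hq.aemeasurable hg.aestronglyMeasurable
  -- a.e. positivity of g under μq
  have hgpos : ∀ᵐ y ∂μq, 0 < g y := by
    rw [hμq, ae_map_iff hq.aemeasurable (measurableSet_lt measurable_const hg)]
    exact Filter.Eventually.of_forall hCpos
  -- step 1 : μ S via product measure
  have hprod : μ.map (fun ω => (p ω, q ω)) = μp.prod μq :=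
    (indepFun_iff_map_prod_eq_prod_map_map hp.aemeasurable hq.aemeasurable).mp hindep
  have hS1 : μ S = ∫⁻ y, μp (Set.Iic (c y)) ∂μq := by
    have h0 : S = (fun ω => (p ω, q ω)) ⁻¹' T := rfl
    rw [h0, ← Measure.map_apply (hp.prodMk hq) hTm, hprod,
      Measure.prod_apply_symm hTm]
    rfl
  -- step 2 : pointwise bound μp (Iic (c y)) ≤ ofReal (c y)
  have hbound : ∀ᵐ y ∂μq, μp (Set.Iic (c y)) ≤ ENNReal.ofReal (c y) := by
    filter_upwards [hgpos] with y hy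
    have hcy : 0 < c y := by positivity
    rcases le_or_gt (c y) 1 with h1 | h1
    · have := hsuper (c y) hcy.le h1
      rwa [hμp, Measure.map_apply hp measurableSet_Iic]
    · calc μp (Set.Iic (c y)) ≤ μp Set.univ := measure_mono (Set.subset_univ _)
        _ = 1 := measure_univ
        _ = ENNReal.ofReal 1 := by simp
        _ ≤ ENNReal.ofReal (c y) := ENNReal.ofReal_le_ofReal h1.le
  -- step 3 : μ S ≤ ofReal (r * a * ∫ g)
  have hcint : Integrable c μq := hgint.const_mul _
  have hcnn : 0 ≤ᵐ[μq] c := by filter_upwards [hgpos] with y hy; positivity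
  have hS2 : μ S ≤ ENNReal.ofReal ((r : ℝ) * a * ∫ y, g y ∂μq) := by
    calc μ S = ∫⁻ y, μp (Set.Iic (c y)) ∂μq := hS1
      _ ≤ ∫⁻ y, ENNReal.ofReal (c y) ∂μq := lintegral_mono_ae hbound
      _ = ENNReal.ofReal (∫ y, c y ∂μq) :=
          (ofReal_integral_eq_lintegral_ofReal hcint hcnn).symm
      _ = ENNReal.ofReal ((r : ℝ) * a * ∫ y, g y ∂μq) := by
          rw [integral_const_mul]
  -- step 4 : conclude
  have hIg : 0 ≤ ∫ y, g y ∂μq := integral_nonneg_of_ae (hgpos.mono fun y h => h.le)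
  have hSR : (μ S).toReal ≤ (r : ℝ) * a * ∫ y, g y ∂μq := by
    have := ENNReal.toReal_mono ENNReal.ofReal_ne_top hS2
    rwa [ENNReal.toReal_ofReal (by positivity)] at this
  calc ∫ ω, (1 / (r : ℝ)) * S.indicator (fun _ => (1 : ℝ)) ω ∂μ
      = (1 / (r : ℝ)) * ∫ ω, S.indicator (fun _ => (1 : ℝ)) ω ∂μ := integral_const_mul _ _
    _ = (1 / (r : ℝ)) * (μ S).toReal := by rw [integral_indicator_const (1 : ℝ) hSm]; simp [Measure.real]
    _ ≤ (1 / (r : ℝ)) * ((r : ℝ) * a * ∫ y, g y ∂μq) := by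
        apply mul_le_mul_of_nonneg_left hSR (by positivity)
    _ = a * ∫ y, g y ∂μq := by field_simp
    _ = a * ∫ ω, g (q ω) ∂μ := by rw [hgint']
end
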